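/- For any nonnegative real numbers x_1, ..., x_n with geometric mean x = (x_1 x_2 ⋯ x_n)^{1/n}, one has (x_1 + x_2 + ⋯ + x_n)/n ≥ x + (1/n) ∑_{i=1}^n (√x_i − √x)². -/

import Mathlib

theorem quantitative_amgm (n : ℕ) (hn : 1 ≤ n) (x : Fin n → ℝ) (hx : ∀ i, 0 ≤ x i) :
    (∑ i, x i) / n ≥
      (∏ i, x i) ^ ((1 : ℝ) / n) +
        (1 / n) * ∑ i, (Real.sqrt (x i) - Real.sqrt ((∏ i, x i) ^ ((1 : ℝ) / n))) ^ 2 := by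
  have hnpos : (0:ℝ) < n := by exact_mod_cast hn
  have hP : 0 ≤ ∏ i, x i := Finset.prod_nonneg fun i _ => hx i
  set g : ℝ := (∏ i, x i) ^ ((1 : ℝ) / n) with hgdef
  have hg : 0 ≤ g := Real.rpow_nonneg hP _
  have hsq : Real.sqrt g ^ 2 = g := Real.sq_sqrt hg
  -- AM-GM for the square roots
  have hamgm : ∏ i, Real.sqrt (x i) ^ ((1:ℝ)/n) ≤ ∑ i, (1/(n:ℝ)) * Real.sqrt (x i) := by
    apply Real.geom_mean_le_arith_mean_weighted
    · intro i _; positivity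
    · simp [Finset.sum_const, Finset.card_fin]
      field_simp
    · intro i _; exact Real.sqrt_nonneg _
  have hprod : ∏ i, Real.sqrt (x i) ^ ((1:ℝ)/n) = Real.sqrt g := by
    simp only [Real.sqrt_eq_rpow]
    rw [← Real.rpow_mul hP]
    rw [Finset.prod_congr rfl fun i _ => (Real.rpow_mul (hx i) _ _).symm]
    rw [← Real.finset_prod_rpow _ _ (fun i _ => hx i)]
    ring_nf
  have key : (n:ℝ) * Real.sqrt g ≤ ∑ i, Real.sqrt (x i) := by
    rw [hprod] at hamgm
    rw [← Finset.mul_sum] at hamgm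
    have h := mul_le_mul_of_nonneg_left hamgm hnpos.le
    have h2 : (n:ℝ) * (1/(n:ℝ) * ∑ i, Real.sqrt (x i)) = ∑ i, Real.sqrt (x i) := by
      field_simp
    linarith
  have hexp : ∑ i, (Real.sqrt (x i) - Real.sqrt g) ^ 2
      = (∑ i, x i) - 2 * Real.sqrt g * (∑ i, Real.sqrt (x i)) + n * g := by
    have : ∀ i, (Real.sqrt (x i) - Real.sqrt g) ^ 2
        = x i - 2 * Real.sqrt g * Real.sqrt (x i) + g := by
      intro i
      have := Real.sq_sqrt (hx i)
      nlinarith [hsq]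
    rw [Finset.sum_congr rfl fun i _ => this i]
    rw [Finset.sum_add_distrib, Finset.sum_sub_distrib, Finset.sum_const, Finset.card_fin,
      ← Finset.mul_sum]
    ring
  rw [hexp]
  have hmul : (n:ℝ) * g ≤ Real.sqrt g * ∑ i, Real.sqrt (x i) := by
    calc (n:ℝ) * g = Real.sqrt g * ((n:ℝ) * Real.sqrt g) := by nlinarith [hsq]
    _ ≤ Real.sqrt g * ∑ i, Real.sqrt (x i) := by
        exact mul_le_mul_of_nonneg_left key (Real.sqrt_nonneg _)
  rw [ge_iff_le, div_eq_mul_inv, ← sub_nonneg]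
  field_simp
  rw [zero_mul]
  nlinarith [hmul]
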